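/- Let {f_i}_{i ∈ I} be a family of C¹ maps f_i : [0, ε) × U → ℝᵏ with f_i(0, x) = x, such that the family is compact in the C¹ topology on compact subsets, and let V = {∂f_i/∂t(0, 0) | i ∈ I}. Suppose α : [0, T) → ℝᵏ satisfies α(0) = 0, is differentiable at 0, and for each t ∈ (0, T) there exist t₁, t₂ ≥ 0 with t₁ + t₂ = t and indices i₁, i₂ ∈ I such that α(t) = f_{i₁}(t₁, f_{i₂}(t₂, 0)). Then α′(0) lies in the closed convex hull of V. -/

import Mathlib

open Set
open Filter Topology

/-- Mean-value estimate along a horizontal segment, uniform along a sequence of maps whose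
derivatives converge uniformly to that of `f j` on a compact box. -/
lemma two_flow_keyA {k : ℕ} {I : Type*}
    (ε : ℝ) (hε : 0 < ε) (U : Set (Fin k → ℝ)) (hU : IsOpen U) (h0U : (0 : Fin k → ℝ) ∈ U)
    (f : I → ℝ × (Fin k → ℝ) → (Fin k → ℝ))
    (hf : ∀ i, ContDiffOn ℝ 1 (f i) (Set.Ico 0 ε ×ˢ U))
    (hfx : ∀ i, ∀ x ∈ U, f i (0, x) = x)
    (r : ℝ) (hr : 0 < r) (hrU : Metric.closedBall (0 : Fin k → ℝ) r ⊆ U)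
    (j : I) (g : ℕ → I)
    (hgd : ∀ δ > 0, ∀ᶠ n in Filter.atTop,
      ∀ p ∈ Set.Icc (0:ℝ) (ε/2) ×ˢ Metric.closedBall (0 : Fin k → ℝ) r,
        ‖fderivWithin ℝ (f (g n)) (Set.Ico 0 ε ×ˢ U) p
          - fderivWithin ℝ (f j) (Set.Ico 0 ε ×ˢ U) p‖ < δ)
    (s : ℕ → ℝ) (hs0 : ∀ n, 0 ≤ s n) (hs : Filter.Tendsto s Filter.atTop (nhds 0))
    (x : ℕ → Fin k → ℝ) (hx : Filter.Tendsto x Filter.atTop (nhds 0)) :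
    ∀ δ > 0, ∀ᶠ n in Filter.atTop,
      ‖f (g n) (s n, x n) - x n
        - s n • (fderivWithin ℝ (f j) (Set.Ico 0 ε ×ˢ U) (0, 0)) (1, 0)‖ ≤ δ * s n := by
  intro δ hδ
  have hUD : UniqueDiffOn ℝ (Set.Ico (0:ℝ) ε ×ˢ U) :=
    (uniqueDiffOn_Ico 0 ε).prod hU.uniqueDiffOn
  have h0D : ((0:ℝ), (0 : Fin k → ℝ)) ∈ Set.Ico (0:ℝ) ε ×ˢ U := ⟨⟨le_rfl, hε⟩, h0U⟩
  have hcont : ContinuousWithinAt (fderivWithin ℝ (f j) (Set.Ico (0:ℝ) ε ×ˢ U))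
      (Set.Ico (0:ℝ) ε ×ˢ U) (0, 0) :=
    ((hf j).continuousOn_fderivWithin hUD le_rfl) _ h0D
  obtain ⟨ρ, hρ, hρ'⟩ := Metric.continuousWithinAt_iff.mp hcont (δ/2) (half_pos hδ)
  have hev2 : ∀ᶠ n in Filter.atTop, s n < min (ε/2) ρ :=
    hs.eventually (eventually_lt_nhds (lt_min (half_pos hε) hρ))
  have hev3 : ∀ᶠ n in Filter.atTop, ‖x n‖ < min r ρ := by
    have := Metric.tendsto_nhds.mp hx (min r ρ) (lt_min hr hρ)
    simpa [dist_zero_right] using this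
  filter_upwards [hgd (δ/2) (half_pos hδ), hev2, hev3] with n h1 h2 h3
  have hsε : s n < ε/2 := lt_of_lt_of_le h2 (min_le_left _ _)
  have hsρ : s n < ρ := lt_of_lt_of_le h2 (min_le_right _ _)
  have hxr : ‖x n‖ ≤ r := le_of_lt (lt_of_lt_of_le h3 (min_le_left _ _))
  have hxρ : ‖x n‖ < ρ := lt_of_lt_of_le h3 (min_le_right _ _)
  have hxB : x n ∈ Metric.closedBall (0 : Fin k → ℝ) r := by
    simpa [Metric.mem_closedBall, dist_zero_right] using hxr
  have hxU : x n ∈ U := hrU hxB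
  set S : Set (ℝ × (Fin k → ℝ)) := Set.Icc (0:ℝ) (s n) ×ˢ ({x n} : Set (Fin k → ℝ)) with hSdef
  have hSD : S ⊆ Set.Ico (0:ℝ) ε ×ˢ U := by
    rintro ⟨u, z⟩ ⟨⟨hu0, hu1⟩, hz⟩
    have hz' : z = x n := hz
    exact ⟨⟨hu0, by nlinarith⟩, hz' ▸ hxU⟩
  have hSK : S ⊆ Set.Icc (0:ℝ) (ε/2) ×ˢ Metric.closedBall (0 : Fin k → ℝ) r := by
    rintro ⟨u, z⟩ ⟨⟨hu0, hu1⟩, hz⟩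
    have hz' : z = x n := hz
    exact ⟨⟨hu0, by linarith⟩, hz' ▸ hxB⟩
  have hSρ : ∀ p ∈ S, dist p ((0:ℝ), (0 : Fin k → ℝ)) < ρ := by
    rintro ⟨u, z⟩ ⟨⟨hu0, hu1⟩, hz⟩
    have hz' : z = x n := hz
    rw [Prod.dist_eq]
    refine max_lt ?_ ?_
    · simpa [Real.dist_eq, abs_of_nonneg hu0] using lt_of_le_of_lt hu1 hsρ
    · simpa [dist_zero_right, hz'] using hxρ
  have bound : ∀ p ∈ S, ‖fderivWithin ℝ (f (g n)) (Set.Ico (0:ℝ) ε ×ˢ U) p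
      - fderivWithin ℝ (f j) (Set.Ico (0:ℝ) ε ×ˢ U) (0, 0)‖ ≤ δ := by
    intro p hp
    have hA := h1 p (hSK hp)
    have hB := hρ' (hSD hp) (hSρ p hp)
    rw [dist_eq_norm] at hB
    calc ‖fderivWithin ℝ (f (g n)) (Set.Ico (0:ℝ) ε ×ˢ U) p
          - fderivWithin ℝ (f j) (Set.Ico (0:ℝ) ε ×ˢ U) (0, 0)‖
        ≤ ‖fderivWithin ℝ (f (g n)) (Set.Ico (0:ℝ) ε ×ˢ U) p
            - fderivWithin ℝ (f j) (Set.Ico (0:ℝ) ε ×ˢ U) p‖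
          + ‖fderivWithin ℝ (f j) (Set.Ico (0:ℝ) ε ×ˢ U) p
            - fderivWithin ℝ (f j) (Set.Ico (0:ℝ) ε ×ˢ U) (0, 0)‖ := by
          have := norm_sub_le_norm_sub_add_norm_sub
            (fderivWithin ℝ (f (g n)) (Set.Ico (0:ℝ) ε ×ˢ U) p)
            (fderivWithin ℝ (f j) (Set.Ico (0:ℝ) ε ×ˢ U) p)
            (fderivWithin ℝ (f j) (Set.Ico (0:ℝ) ε ×ˢ U) (0, 0))
          exact this
      _ ≤ δ/2 + δ/2 := add_le_add hA.le hB.le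
      _ = δ := by ring
  have hders : ∀ p ∈ S, HasFDerivWithinAt (f (g n))
      (fderivWithin ℝ (f (g n)) (Set.Ico (0:ℝ) ε ×ˢ U) p) S p := fun p hp =>
    ((((hf (g n)).differentiableOn one_ne_zero) p (hSD hp)).hasFDerivWithinAt).mono hSD
  have hconv : Convex ℝ S := (convex_Icc _ _).prod (convex_singleton _)
  have hmem0 : ((0:ℝ), x n) ∈ S := ⟨⟨le_rfl, hs0 n⟩, rfl⟩
  have hmems : (s n, x n) ∈ S := ⟨⟨hs0 n, le_rfl⟩, rfl⟩
  have key := hconv.norm_image_sub_le_of_norm_hasFDerivWithin_le' hders bound hmem0 hmems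
  have h4 : f (g n) (0, x n) = x n := hfx _ _ hxU
  have h5 : ((s n, x n) : ℝ × (Fin k → ℝ)) - (0, x n)
      = s n • ((1:ℝ), (0 : Fin k → ℝ)) := by
    simp [Prod.ext_iff]
  have h6 : ‖s n • ((1:ℝ), (0 : Fin k → ℝ))‖ = s n := by
    rw [norm_smul]
    simp [Prod.norm_def, Real.norm_eq_abs, abs_of_nonneg (hs0 n)]
  rw [h4, h5, map_smul, h6] at key
  exact key

theorem two_flow_derivative_in_closed_convex_hull {k : ℕ} {I : Type*} [Nonempty I]
    (ε T : ℝ) (hε : 0 < ε) (hT : 0 < T)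
    (U : Set (Fin k → ℝ)) (hU : IsOpen U) (h0U : (0 : Fin k → ℝ) ∈ U)
    (f : I → ℝ × (Fin k → ℝ) → (Fin k → ℝ))
    (hf : ∀ i, ContDiffOn ℝ 1 (f i) (Set.Ico 0 ε ×ˢ U))
    (hfx : ∀ i, ∀ x ∈ U, f i (0, x) = x)
    -- sequential compactness of the family in the C¹ topology on compact subsets
    (hcpt : ∀ s : ℕ → I, ∃ σ : ℕ → ℕ, StrictMono σ ∧ ∃ i₀ : I,
      ∀ K : Set (ℝ × (Fin k → ℝ)), IsCompact K → K ⊆ Set.Ico 0 ε ×ˢ U →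
        TendstoUniformlyOn (fun n => f (s (σ n))) (f i₀) Filter.atTop K ∧
        TendstoUniformlyOn
          (fun n p => fderivWithin ℝ (f (s (σ n))) (Set.Ico 0 ε ×ˢ U) p)
          (fun p => fderivWithin ℝ (f i₀) (Set.Ico 0 ε ×ˢ U) p) Filter.atTop K)
    (α : ℝ → (Fin k → ℝ)) (hα0 : α 0 = 0)
    (v : Fin k → ℝ) (hαd : HasDerivWithinAt α v (Set.Ici 0) 0)
    (hαf : ∀ t ∈ Set.Ioo 0 T, ∃ t₁ t₂ : ℝ, 0 ≤ t₁ ∧ 0 ≤ t₂ ∧ t₁ + t₂ = t ∧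
      ∃ i₁ i₂ : I, α t = f i₁ (t₁, f i₂ (t₂, 0))) :
    v ∈ closure (convexHull ℝ
      {w : Fin k → ℝ | ∃ i : I,
        w = derivWithin (fun t => f i (t, (0 : Fin k → ℝ))) (Set.Ici 0) 0}) := by
  classical
  set V := {w : Fin k → ℝ | ∃ i : I,
      w = derivWithin (fun t => f i (t, (0 : Fin k → ℝ))) (Set.Ici 0) 0} with hVdef
  have h0D : ((0:ℝ), (0 : Fin k → ℝ)) ∈ Set.Ico (0:ℝ) ε ×ˢ U := ⟨⟨le_rfl, hε⟩, h0U⟩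
  -- the time sequence
  set t : ℕ → ℝ := fun n => T / (n + 2) with htdef
  have htpos : ∀ n, 0 < t n := fun n => div_pos hT (by positivity)
  have htT : ∀ n, t n < T := by
    intro n
    have hn : (0:ℝ) ≤ n := Nat.cast_nonneg n
    rw [htdef]
    simp only
    rw [div_lt_iff₀ (by positivity)]
    nlinarith
  have htlim : Tendsto t atTop (𝓝 0) := by
    apply Tendsto.div_atTop tendsto_const_nhds
    exact tendsto_atTop_add_const_right _ 2 tendsto_natCast_atTop_atTop
  -- choose decompositions
  have H : ∀ n, ∃ t₁ t₂ : ℝ, 0 ≤ t₁ ∧ 0 ≤ t₂ ∧ t₁ + t₂ = t n ∧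
      ∃ i₁ i₂ : I, α (t n) = f i₁ (t₁, f i₂ (t₂, 0)) :=
    fun n => hαf (t n) ⟨htpos n, htT n⟩
  choose t₁ t₂ ht₁0 ht₂0 hsum a b hαn using H
  have ht₁t : ∀ n, t₁ n ≤ t n := fun n => by nlinarith [ht₂0 n, hsum n]
  have ht₂t : ∀ n, t₂ n ≤ t n := fun n => by nlinarith [ht₁0 n, hsum n]
  have ht₁lim : Tendsto t₁ atTop (𝓝 0) := squeeze_zero ht₁0 ht₁t htlim
  have ht₂lim : Tendsto t₂ atTop (𝓝 0) := squeeze_zero ht₂0 ht₂t htlim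
  -- subsequences
  obtain ⟨σ₁, hσ₁, j₂, hj₂⟩ := hcpt b
  obtain ⟨σ₂, hσ₂, j₁, hj₁⟩ := hcpt (fun n => a (σ₁ n))
  set lam : ℕ → ℝ := fun n => t₁ n / t n with hlamdef
  have hlam01 : ∀ n, lam n ∈ Set.Icc (0:ℝ) 1 := fun n =>
    ⟨div_nonneg (ht₁0 n) (htpos n).le, (div_le_one (htpos n)).mpr (ht₁t n)⟩
  obtain ⟨l, hl, σ₃, hσ₃, hlamlim⟩ :=
    isCompact_Icc.tendsto_subseq (fun n => hlam01 (σ₁ (σ₂ n)))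
  set τ : ℕ → ℕ := fun n => σ₁ (σ₂ (σ₃ n)) with hτdef
  have hτ : Tendsto τ atTop atTop :=
    hσ₁.tendsto_atTop.comp (hσ₂.tendsto_atTop.comp hσ₃.tendsto_atTop)
  have hlamτ : Tendsto (fun n => lam (τ n)) atTop (𝓝 l) := hlamlim
  -- the compact box
  obtain ⟨r₀, hr₀, hball⟩ := Metric.isOpen_iff.mp hU 0 h0U
  have hr : 0 < r₀ / 2 := by linarith
  have hrU : Metric.closedBall (0 : Fin k → ℝ) (r₀/2) ⊆ U :=
    (Metric.closedBall_subset_ball (by linarith)).trans hball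
  have hKc : IsCompact (Set.Icc (0:ℝ) (ε/2) ×ˢ Metric.closedBall (0 : Fin k → ℝ) (r₀/2)) :=
    isCompact_Icc.prod (isCompact_closedBall _ _)
  have hKD : Set.Icc (0:ℝ) (ε/2) ×ˢ Metric.closedBall (0 : Fin k → ℝ) (r₀/2)
      ⊆ Set.Ico (0:ℝ) ε ×ˢ U :=
    Set.prod_mono (fun u hu => ⟨hu.1, lt_of_le_of_lt hu.2 (half_lt_self hε)⟩) hrU
  -- uniform convergence of derivatives along τ
  have hgd₂ : ∀ δ > 0, ∀ᶠ n in Filter.atTop,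
      ∀ p ∈ Set.Icc (0:ℝ) (ε/2) ×ˢ Metric.closedBall (0 : Fin k → ℝ) (r₀/2),
        ‖fderivWithin ℝ (f (b (τ n))) (Set.Ico 0 ε ×ˢ U) p
          - fderivWithin ℝ (f j₂) (Set.Ico 0 ε ×ˢ U) p‖ < δ := by
    intro δ hδ
    have h := Metric.tendstoUniformlyOn_iff.mp (hj₂ _ hKc hKD).2 δ hδ
    have h2 := ((hσ₂.tendsto_atTop.comp hσ₃.tendsto_atTop)).eventually h
    filter_upwards [h2] with n hn p hp
    have := hn p hp
    rw [dist_comm, dist_eq_norm] at this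
    exact this
  have hgd₁ : ∀ δ > 0, ∀ᶠ n in Filter.atTop,
      ∀ p ∈ Set.Icc (0:ℝ) (ε/2) ×ˢ Metric.closedBall (0 : Fin k → ℝ) (r₀/2),
        ‖fderivWithin ℝ (f (a (τ n))) (Set.Ico 0 ε ×ˢ U) p
          - fderivWithin ℝ (f j₁) (Set.Ico 0 ε ×ˢ U) p‖ < δ := by
    intro δ hδ
    have h := Metric.tendstoUniformlyOn_iff.mp (hj₁ _ hKc hKD).2 δ hδ
    have h2 := (hσ₃.tendsto_atTop).eventually h
    filter_upwards [h2] with n hn p hp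
    have := hn p hp
    rw [dist_comm, dist_eq_norm] at this
    exact this
  -- key estimates
  have hinner := two_flow_keyA ε hε U hU h0U f hf hfx (r₀/2) hr hrU j₂
    (fun n => b (τ n)) hgd₂ (fun n => t₂ (τ n)) (fun n => ht₂0 _) (ht₂lim.comp hτ)
    (fun _ => 0) tendsto_const_nhds
  set w₂ : Fin k → ℝ := (fderivWithin ℝ (f j₂) (Set.Ico 0 ε ×ˢ U) (0, 0)) (1, 0) with hw₂def
  set w₁ : Fin k → ℝ := (fderivWithin ℝ (f j₁) (Set.Ico 0 ε ×ˢ U) (0, 0)) (1, 0) with hw₁def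
  set y : ℕ → Fin k → ℝ := fun n => f (b (τ n)) (t₂ (τ n), 0) with hydef
  have hinner' : ∀ δ > 0, ∀ᶠ n in Filter.atTop,
      ‖y n - t₂ (τ n) • w₂‖ ≤ δ * t₂ (τ n) := by
    intro δ hδ
    filter_upwards [hinner δ hδ] with n hn
    simpa using hn
  have hylim : Tendsto y atTop (𝓝 0) := by
    have hb2 : Tendsto (fun n => (1 + ‖w₂‖) * t₂ (τ n)) atTop (𝓝 0) := by
      have := (ht₂lim.comp hτ).const_mul (1 + ‖w₂‖)
      simpa using this
    refine squeeze_zero_norm' ?_ hb2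
    filter_upwards [hinner' 1 one_pos] with n hn
    calc ‖y n‖ ≤ ‖y n - t₂ (τ n) • w₂‖ + ‖t₂ (τ n) • w₂‖ := by
          have := norm_add_le (y n - t₂ (τ n) • w₂) (t₂ (τ n) • w₂)
          simpa using this
      _ ≤ 1 * t₂ (τ n) + t₂ (τ n) * ‖w₂‖ := by
          refine add_le_add hn ?_
          rw [norm_smul, Real.norm_eq_abs, abs_of_nonneg (ht₂0 _)]
      _ = (1 + ‖w₂‖) * t₂ (τ n) := by ring
  have houter := two_flow_keyA ε hε U hU h0U f hf hfx (r₀/2) hr hrU j₁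
    (fun n => a (τ n)) hgd₁ (fun n => t₁ (τ n)) (fun n => ht₁0 _) (ht₁lim.comp hτ)
    y hylim
  -- the limit point
  have hcn : Tendsto (fun n => lam (τ n) • w₁ + (1 - lam (τ n)) • w₂) atTop
      (𝓝 (l • w₁ + (1 - l) • w₂)) :=
    (hlamτ.smul_const w₁).add ((tendsto_const_nhds.sub hlamτ).smul_const w₂)
  have hdiff : Tendsto (fun n => (t (τ n))⁻¹ • α (t (τ n))
      - (lam (τ n) • w₁ + (1 - lam (τ n)) • w₂)) atTop (𝓝 0) := by
    rw [NormedAddCommGroup.tendsto_nhds_zero]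
    intro δ hδ
    filter_upwards [houter (δ/2) (half_pos hδ), hinner' (δ/2) (half_pos hδ)] with n h1 h2
    have hne : t (τ n) ≠ 0 := (htpos _).ne'
    have hα' : α (t (τ n)) = f (a (τ n)) (t₁ (τ n), y n) := hαn (τ n)
    have h1' : ‖α (t (τ n)) - y n - t₁ (τ n) • w₁‖ ≤ δ/2 * t₁ (τ n) := by
      rw [hα']; exact h1
    have e1 : lam (τ n) = (t (τ n))⁻¹ * t₁ (τ n) := by
      rw [hlamdef]; simp only; rw [div_eq_inv_mul]
    have e2 : 1 - lam (τ n) = (t (τ n))⁻¹ * t₂ (τ n) := by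
      simp only [hlamdef]
      field_simp
      linarith [hsum (τ n)]
    have hid : (t (τ n))⁻¹ • α (t (τ n)) - (lam (τ n) • w₁ + (1 - lam (τ n)) • w₂)
        = (t (τ n))⁻¹ • ((α (t (τ n)) - y n - t₁ (τ n) • w₁) + (y n - t₂ (τ n) • w₂)) := by
      rw [e2, e1, mul_smul, mul_smul, ← smul_add, ← smul_sub]
      congr 1
      abel
    rw [hid, norm_smul, Real.norm_eq_abs, abs_of_pos (inv_pos.mpr (htpos _))]
    have hbd : ‖(α (t (τ n)) - y n - t₁ (τ n) • w₁) + (y n - t₂ (τ n) • w₂)‖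
        ≤ δ/2 * t₁ (τ n) + δ/2 * t₂ (τ n) :=
      le_trans (norm_add_le _ _) (add_le_add h1' h2)
    calc (t (τ n))⁻¹ * ‖(α (t (τ n)) - y n - t₁ (τ n) • w₁) + (y n - t₂ (τ n) • w₂)‖
        ≤ (t (τ n))⁻¹ * (δ/2 * t₁ (τ n) + δ/2 * t₂ (τ n)) := by
          exact mul_le_mul_of_nonneg_left hbd (by positivity)
      _ = δ/2 := by
          rw [show δ/2 * t₁ (τ n) + δ/2 * t₂ (τ n) = δ/2 * (t₁ (τ n) + t₂ (τ n)) from by ring,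
            hsum (τ n)]
          field_simp
      _ < δ := half_lt_self hδ
  have hLlim : Tendsto (fun n => (t (τ n))⁻¹ • α (t (τ n))) atTop
      (𝓝 (l • w₁ + (1 - l) • w₂)) := by
    have := hdiff.add hcn
    rw [zero_add] at this
    simpa using this
  -- v is the same limit
  have hvlim : Tendsto (fun n => (t (τ n))⁻¹ • α (t (τ n))) atTop (𝓝 v) := by
    have hslope := hasDerivWithinAt_iff_tendsto_slope.mp hαd
    have hto : Tendsto (fun n => t (τ n)) atTop (𝓝[Set.Ici (0:ℝ) \ {0}] 0) := by
      apply tendsto_nhdsWithin_of_tendsto_nhds_of_eventually_within _ (htlim.comp hτ)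
      exact Filter.Eventually.of_forall fun n => ⟨(htpos _).le, by simp [(htpos (τ n)).ne']⟩
    have hcomp := hslope.comp hto
    have heq : (fun n => slope α 0 (t (τ n))) = fun n => (t (τ n))⁻¹ • α (t (τ n)) := by
      funext n
      rw [slope_def_module, hα0, sub_zero, sub_zero]
    rw [← heq]
    exact hcomp
  have hveq : v = l • w₁ + (1 - l) • w₂ := tendsto_nhds_unique hvlim hLlim
  -- membership
  have hw : ∀ j : I, (fderivWithin ℝ (f j) (Set.Ico 0 ε ×ˢ U) (0, 0)) (1, 0)
      = derivWithin (fun s => f j (s, (0 : Fin k → ℝ))) (Set.Ici 0) 0 := by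
    intro j
    have hFd : HasFDerivWithinAt (f j) (fderivWithin ℝ (f j) (Set.Ico 0 ε ×ˢ U) (0, 0))
        (Set.Ico (0:ℝ) ε ×ˢ U) (0, 0) :=
      (((hf j).differentiableOn one_ne_zero) _ h0D).hasFDerivWithinAt
    have hc : HasDerivWithinAt (fun s : ℝ => ((s, (0 : Fin k → ℝ)) : ℝ × (Fin k → ℝ)))
        ((1:ℝ), (0 : Fin k → ℝ)) (Set.Ico (0:ℝ) ε) 0 :=
      (hasDerivWithinAt_id _ _).prodMk (hasDerivWithinAt_const _ _ _)
    have hmaps : Set.MapsTo (fun s : ℝ => ((s, (0 : Fin k → ℝ)) : ℝ × (Fin k → ℝ)))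
        (Set.Ico (0:ℝ) ε) (Set.Ico (0:ℝ) ε ×ˢ U) := fun s hs => ⟨hs, h0U⟩
    have hcomp := hFd.comp_hasDerivWithinAt 0 hc hmaps
    have hIci : HasDerivWithinAt (fun s => f j (s, (0 : Fin k → ℝ)))
        ((fderivWithin ℝ (f j) (Set.Ico 0 ε ×ˢ U) (0, 0)) (1, 0)) (Set.Ici 0) 0 := by
      have hmem : Set.Ico (0:ℝ) ε ∈ nhdsWithin 0 (Set.Ici (0:ℝ)) :=
        Ico_mem_nhdsGE hε
      exact (hcomp.mono_of_mem_nhdsWithin hmem)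
    exact (hIci.derivWithin (uniqueDiffOn_Ici 0 0 Set.self_mem_Ici)).symm
  have hw₁V : w₁ ∈ V := ⟨j₁, hw j₁⟩
  have hw₂V : w₂ ∈ V := ⟨j₂, hw j₂⟩
  have hLmem : l • w₁ + (1 - l) • w₂ ∈ convexHull ℝ V :=
    (convex_convexHull ℝ V) (subset_convexHull ℝ V hw₁V) (subset_convexHull ℝ V hw₂V)
      hl.1 (by linarith [hl.2]) (by ring)
  rw [hveq]
  exact subset_closure hLmem
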